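/- Let V be a finite-dimensional ℂ-vector space with filtrations W and F of Hodge–Tate type. Then the linear map ⊕_k (F^k ∩ W_{2k}) → V induced by the inclusion maps F^k ∩ W_{2k} ⊆ V is a ℂ-linear isomorphism; equivalently, V is the internal direct sum of the subspaces F^k ∩ W_{2k}, k ∈ ℤ (only finitely many of which are nonzero). -/
import Mathlib


/-- A pair of filtrations `(W, F)` on a complex vector space `V` is of Hodge–Tate type:
`W` is an increasing (weight) filtration, exhaustive and separated, `F` a decreasing (Hodge)
filtration, the odd weight-graded pieces vanish, and the weight-`2k` graded piece is pure of
Hodge type `(k, k)`. -/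
structure IsHodgeTate {V : Type*} [AddCommGroup V] [Module ℂ V]
    (W : ℤ → Submodule ℂ V) (F : ℤ → Submodule ℂ V) : Prop where
  mono : Monotone W
  anti : Antitone F
  bot : ∃ N : ℤ, ∀ n ≤ N, W n = ⊥
  top : ∃ N : ℤ, ∀ n, N ≤ n → W n = ⊤
  odd : ∀ k : ℤ, W (2 * k + 1) = W (2 * k)
  pure_surj : ∀ k : ℤ, (F k ⊓ W (2 * k)) ⊔ W (2 * k - 2) = W (2 * k)
  pure_inj : ∀ k : ℤ, F (k + 1) ⊓ W (2 * k) ≤ W (2 * k - 2)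

/-- Key vanishing lemma: `F^k ∩ W_{2k-2} = 0`. -/
lemma IsHodgeTate.inf_bot {V : Type*} [AddCommGroup V] [Module ℂ V]
    {W F : ℤ → Submodule ℂ V} (h : IsHodgeTate W F) (k : ℤ) :
    F k ⊓ W (2 * k - 2) = ⊥ := by
  obtain ⟨N0, hN0⟩ := h.bot
  set N : ℤ := min N0 0 with hN
  have hNbot : ∀ n ≤ N, W n = ⊥ := fun n hn => hN0 n (hn.trans (min_le_left _ _))
  have hNle : N ≤ 0 := min_le_right _ _
  rw [eq_bot_iff]
  intro x hx
  obtain ⟨hxF, hxW⟩ := hx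
  have key : ∀ m : ℕ, x ∈ W (2 * (k - 1 - m)) := by
    intro m
    induction m with
    | zero =>
        have e : 2 * (k - 1 - (0 : ℕ)) = 2 * k - 2 := by push_cast; ring
        rw [e]; exact hxW
    | succ m ih =>
        set j : ℤ := k - 1 - m with hj
        have hF : x ∈ F (j + 1) := h.anti (by omega) hxF
        have hstep := h.pure_inj j ⟨hF, ih⟩
        have e : 2 * j - 2 = 2 * (k - 1 - (m + 1 : ℕ)) := by push_cast; omega
        rw [e] at hstep
        exact hstep
  have hm := key (k - N).toNat
  have hle : k - N ≤ ((k - N).toNat : ℤ) := Int.self_le_toNat _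
  have : (2 * (k - 1 - ((k - N).toNat : ℤ))) ≤ N := by omega
  have hb := hNbot _ this
  have := h.mono (le_refl (2 * (k - 1 - ((k - N).toNat : ℤ))))
  rw [hNbot _ ‹2 * (k - 1 - ((k - N).toNat : ℤ)) ≤ N›] at hm
  simpa using hm

lemma IsHodgeTate.iSup_eq_top {V : Type*} [AddCommGroup V] [Module ℂ V]
    {W F : ℤ → Submodule ℂ V} (h : IsHodgeTate W F) :
    ⨆ k : ℤ, (F k ⊓ W (2 * k)) = ⊤ := by
  obtain ⟨N0, hN0⟩ := h.bot
  set N : ℤ := min N0 0 with hN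
  have hNbot : ∀ n ≤ N, W n = ⊥ := fun n hn => hN0 n (hn.trans (min_le_left _ _))
  have hNle : N ≤ 0 := min_le_right _ _
  set S : Submodule ℂ V := ⨆ k : ℤ, (F k ⊓ W (2 * k)) with hS
  have key : ∀ n : ℤ, ∀ m : ℕ, W (2 * n) ≤ S ⊔ W (2 * (n - m)) := by
    intro n m
    induction m with
    | zero =>
        have e : 2 * (n - (0 : ℕ)) = 2 * n := by push_cast; ring
        rw [e]; exact le_sup_right
    | succ m ih =>
        refine ih.trans ?_
        have hsplit : W (2 * (n - m)) = (F (n - m) ⊓ W (2 * (n - m))) ⊔ W (2 * (n - m) - 2) :=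
          (h.pure_surj (n - m)).symm
        have hP : F (n - m) ⊓ W (2 * (n - m)) ≤ S := le_iSup (fun k : ℤ => F k ⊓ W (2 * k)) (n - m)
        have e : 2 * (n - m) - 2 = 2 * (n - (m + 1 : ℕ)) := by push_cast; ring
        calc S ⊔ W (2 * (n - m)) = S ⊔ ((F (n - m) ⊓ W (2 * (n - m))) ⊔ W (2 * (n - m) - 2)) := by
              rw [← hsplit]
          _ ≤ S ⊔ (S ⊔ W (2 * (n - m) - 2)) := sup_le_sup_left (sup_le_sup_right hP _) _
          _ = S ⊔ W (2 * (n - (m + 1 : ℕ))) := by rw [← sup_assoc, sup_idem, e]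
  have hW : ∀ n : ℤ, W (2 * n) ≤ S := by
    intro n
    have hm := key n (n - N).toNat
    have hle : n - N ≤ ((n - N).toNat : ℤ) := Int.self_le_toNat _
    have hsmall : 2 * (n - ((n - N).toNat : ℤ)) ≤ N := by omega
    rw [hNbot _ hsmall, sup_bot_eq] at hm
    exact hm
  obtain ⟨M, hM⟩ := h.top
  have htop : W (2 * max M 0) = ⊤ := hM _ (by have := le_max_left M 0; have := le_max_right M 0; omega)
  exact le_antisymm le_top (htop ▸ hW (max M 0))

/-- `V` is the internal direct sum of the subspaces `F^k ∩ W_{2k}`, `k ∈ ℤ`: the map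
`⊕_k (F^k ∩ W_{2k}) → V` induced by the inclusions is a `ℂ`-linear isomorphism. -/
theorem stmt_2 {V : Type*} [AddCommGroup V] [Module ℂ V] [FiniteDimensional ℂ V]
    (W F : ℤ → Submodule ℂ V) (h : IsHodgeTate W F) :
    DirectSum.IsInternal (fun k : ℤ => F k ⊓ W (2 * k)) := by
  rw [DirectSum.isInternal_submodule_iff_iSupIndep_and_iSup_eq_top]
  refine ⟨?_, h.iSup_eq_top⟩
  intro k
  rw [disjoint_iff, eq_bot_iff]
  intro x hx
  obtain ⟨hxP, hxS⟩ := hx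
  obtain ⟨hxF, hxW⟩ := hxP
  -- the sup of the other pieces lies in `W (2k-2) ⊔ F (k+1)`
  have hle : (⨆ j : ℤ, ⨆ _ : j ≠ k, (F j ⊓ W (2 * j))) ≤ W (2 * k - 2) ⊔ F (k + 1) := by
    refine iSup_le fun j => iSup_le fun hj => ?_
    rcases lt_or_gt_of_ne hj with hlt | hgt
    · exact le_sup_left.trans' (inf_le_right.trans ((h.mono (by omega)).trans le_rfl))
    · exact le_sup_right.trans' (inf_le_left.trans (h.anti (by omega)))
  have hx' : x ∈ W (2 * k - 2) ⊔ F (k + 1) := hle hxS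
  obtain ⟨w, hw, f, hf, hwf⟩ := Submodule.mem_sup.mp hx'
  have hfW : f ∈ W (2 * k) := by
    have : f = x - w := by rw [← hwf]; abel
    rw [this]
    exact Submodule.sub_mem _ hxW (h.mono (by omega) hw)
  have hfsmall : f ∈ W (2 * k - 2) := h.pure_inj k ⟨hf, hfW⟩
  have hxsmall : x ∈ W (2 * k - 2) := by
    rw [← hwf]; exact Submodule.add_mem _ hw hfsmall
  have : x ∈ F k ⊓ W (2 * k - 2) := ⟨hxF, hxsmall⟩
  rw [h.inf_bot k] at this
  simpa using this
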